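/- Let M > 0 and let u : ℝ → ℝ be a C¹ function with compact support such that ‖u‖_{L²(ℝ)} ≤ M and ‖u'‖_{L²(ℝ)} ≤ M. Then (sup_{x ∈ ℝ} |u(x)|)³ ≤ 2√2 · M² · ‖u‖_{L²(ℝ)}. -/

import Mathlib

open MeasureTheory

/-- If `u : ℝ → ℝ` is `C¹` with compact support, `‖u‖_{L²} ≤ M` and
`‖u'‖_{L²} ≤ M`, then `(sup_x |u x|)³ ≤ 2√2 · M² · ‖u‖_{L²}`. -/
theorem sup_abs_pow_three_le (M : ℝ) (hM : 0 < M) (u : ℝ → ℝ)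
    (hu : ContDiff ℝ 1 u) (hsupp : HasCompactSupport u)
    (hL2 : Real.sqrt (∫ x : ℝ, (u x) ^ 2) ≤ M)
    (hL2' : Real.sqrt (∫ x : ℝ, (deriv u x) ^ 2) ≤ M) :
    (⨆ x : ℝ, |u x|) ^ 3 ≤ 2 * Real.sqrt 2 * M ^ 2 * Real.sqrt (∫ x : ℝ, (u x) ^ 2) := by
  set A := Real.sqrt (∫ x : ℝ, (u x) ^ 2) with hA
  set B := Real.sqrt (∫ x : ℝ, (deriv u x) ^ 2) with hB
  have hAnn : 0 ≤ A := Real.sqrt_nonneg _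
  have hBnn : 0 ≤ B := Real.sqrt_nonneg _
  have hcont : Continuous u := hu.continuous
  have hderiv : ∀ x : ℝ, HasDerivAt u (deriv u x) x :=
    fun x => (hu.differentiable one_ne_zero).differentiableAt.hasDerivAt
  have hcont' : Continuous (deriv u) := (hu.iterate_deriv' 0 1).continuous
  -- integrability facts
  have hmem2u : MemLp u 2 (volume : Measure ℝ) :=
    hcont.memLp_of_hasCompactSupport hsupp
  have hmem2u' : MemLp (deriv u) 2 (volume : Measure ℝ) :=
    hcont'.memLp_of_hasCompactSupport hsupp.deriv
  -- Cauchy-Schwarz: ∫ |u| * |u'| ≤ A * B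
  have hCS : ∫ x : ℝ, |u x| * |deriv u x| ≤ A * B := by
    have hpq : Real.HolderConjugate 2 2 := by constructor <;> norm_num
    have h := integral_mul_le_Lp_mul_Lq_of_nonneg (μ := volume) hpq
      (f := fun x => |u x|) (g := fun x => |deriv u x|)
      (Filter.Eventually.of_forall fun x => abs_nonneg _)
      (Filter.Eventually.of_forall fun x => abs_nonneg _)
      (by rw [ENNReal.ofReal_ofNat]; exact hmem2u.abs) (by rw [ENNReal.ofReal_ofNat]; exact hmem2u'.abs)
    have e1 : (∫ x : ℝ, |u x| ^ (2:ℝ)) = ∫ x : ℝ, (u x) ^ 2 := by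
      refine integral_congr_ae (Filter.Eventually.of_forall fun x => ?_)
      show |u x| ^ (2:ℝ) = u x ^ 2
      rw [show ((2:ℝ)) = ((2:ℕ):ℝ) by norm_num, Real.rpow_natCast, sq_abs]
    have e2 : (∫ x : ℝ, |deriv u x| ^ (2:ℝ)) = ∫ x : ℝ, (deriv u x) ^ 2 := by
      refine integral_congr_ae (Filter.Eventually.of_forall fun x => ?_)
      show |deriv u x| ^ (2:ℝ) = deriv u x ^ 2
      rw [show ((2:ℝ)) = ((2:ℕ):ℝ) by norm_num, Real.rpow_natCast, sq_abs]
    rw [e1, e2] at h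
    calc ∫ x : ℝ, |u x| * |deriv u x|
        ≤ (∫ x : ℝ, (u x) ^ 2) ^ (1/2 : ℝ) * (∫ x : ℝ, (deriv u x) ^ 2) ^ (1/2 : ℝ) := h
      _ = A * B := by
          rw [hA, hB, Real.sqrt_eq_rpow, Real.sqrt_eq_rpow]
  -- pointwise bound : u x ^ 2 ≤ 2 * A * B
  have hg : Continuous (fun t : ℝ => 2 * (u t * deriv u t)) := by
    exact (continuous_const.mul (hcont.mul hcont'))
  have hgint : Integrable (fun t : ℝ => |u t| * |deriv u t|) volume := by
    have : HasCompactSupport (fun t : ℝ => |u t| * |deriv u t|) := by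
      apply HasCompactSupport.mul_right (hsupp.abs)
    exact (hcont.abs.mul hcont'.abs).integrable_of_hasCompactSupport this
  have hpt : ∀ x : ℝ, (u x) ^ 2 ≤ 2 * (A * B) := by
    intro x
    -- find y ≤ x with u y = 0
    obtain ⟨R, hR⟩ := (hsupp.isBounded).subset_closedBall 0
    set y := min (-R - 1) x with hy
    have hyx : y ≤ x := min_le_right _ _
    have huy : u y = 0 := by
      apply image_eq_zero_of_notMem_tsupport
      intro hmem
      have := hR hmem
      simp only [Metric.mem_closedBall, Real.dist_eq, sub_zero] at this
      have h1 : y ≤ -R - 1 := min_le_left _ _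
      have h2 : -R ≤ y := by
        have := abs_le.mp this
        linarith [this.1]
      linarith
    have hftc : (∫ t in y..x, 2 * (u t * deriv u t)) = u x ^ 2 - u y ^ 2 := by
      apply intervalIntegral.integral_eq_sub_of_hasDerivAt
      · intro t _
        have h := (hderiv t).fun_pow 2
        convert h using 1
        · rfl
        push_cast
        ring
      · exact hg.intervalIntegrable _ _
    have hb1 : (∫ t in y..x, 2 * (u t * deriv u t)) ≤ ∫ t in y..x, 2 * (|u t| * |deriv u t|) := by
      apply intervalIntegral.integral_mono_on hyx
      · exact (hg.intervalIntegrable _ _)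
      · exact ((continuous_const.mul (hcont.abs.mul hcont'.abs)).intervalIntegrable _ _)
      · intro t _
        have : u t * deriv u t ≤ |u t * deriv u t| := le_abs_self _
        rw [abs_mul] at this
        linarith
    have hb2 : (∫ t in y..x, 2 * (|u t| * |deriv u t|)) ≤ ∫ t : ℝ, 2 * (|u t| * |deriv u t|) := by
      rw [intervalIntegral.integral_of_le hyx]
      have := setIntegral_le_integral (μ := volume) (s := Set.Ioc y x)
        (f := fun t => 2 * (|u t| * |deriv u t|)) (hgint.const_mul 2)
        (Filter.Eventually.of_forall fun t => by positivity)
      exact this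
    have hb3 : (∫ t : ℝ, 2 * (|u t| * |deriv u t|)) ≤ 2 * (A * B) := by
      rw [integral_const_mul]
      linarith [hCS]
    calc (u x) ^ 2 = (u x) ^ 2 - 0 ^ 2 := by ring
      _ = ∫ t in y..x, 2 * (u t * deriv u t) := by rw [hftc, huy]
      _ ≤ 2 * (A * B) := le_trans hb1 (le_trans hb2 hb3)
  -- sup bound
  set S := ⨆ x : ℝ, |u x| with hS
  have hbdd : BddAbove (Set.range fun x : ℝ => |u x|) :=
    hcont.abs.bddAbove_range_of_hasCompactSupport hsupp.abs
  have hSnn : 0 ≤ S := le_trans (abs_nonneg (u 0)) (le_ciSup hbdd 0)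
  have hSle : S ≤ Real.sqrt (2 * (A * B)) := by
    apply ciSup_le
    intro x
    rw [← Real.sqrt_sq_eq_abs]
    exact Real.sqrt_le_sqrt (hpt x)
  have hABnn : 0 ≤ 2 * (A * B) := by positivity
  have key : S ^ 3 ≤ Real.sqrt (2 * (A * B)) ^ 3 := by
    exact pow_le_pow_left₀ hSnn hSle 3
  have hexp : Real.sqrt (2 * (A * B)) ^ 3
      = 2 * (A * B) * Real.sqrt (2 * (A * B)) := by
    rw [pow_succ, Real.sq_sqrt hABnn]
  have hsqrt_split : Real.sqrt (2 * (A * B)) = Real.sqrt 2 * (Real.sqrt A * Real.sqrt B) := by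
    rw [Real.sqrt_mul (by norm_num), Real.sqrt_mul hAnn]
  have hAM : Real.sqrt A ≤ Real.sqrt M := Real.sqrt_le_sqrt hL2
  have hBM : Real.sqrt B ≤ Real.sqrt M := Real.sqrt_le_sqrt hL2'
  have hBM' : B ≤ M := hL2'
  have hfinal : 2 * (A * B) * Real.sqrt (2 * (A * B)) ≤ 2 * Real.sqrt 2 * M ^ 2 * A := by
    rw [hsqrt_split]
    have h1 : B * (Real.sqrt A * Real.sqrt B) ≤ M * (Real.sqrt M * Real.sqrt M) := by
      apply mul_le_mul hBM' _ (by positivity) hM.le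
      exact mul_le_mul hAM hBM (Real.sqrt_nonneg _) (Real.sqrt_nonneg _)
    have h2 : Real.sqrt M * Real.sqrt M = M := Real.mul_self_sqrt hM.le
    calc 2 * (A * B) * (Real.sqrt 2 * (Real.sqrt A * Real.sqrt B))
        = 2 * Real.sqrt 2 * A * (B * (Real.sqrt A * Real.sqrt B)) := by ring
      _ ≤ 2 * Real.sqrt 2 * A * (M * (Real.sqrt M * Real.sqrt M)) := by
          apply mul_le_mul_of_nonneg_left h1 (by positivity)
      _ = 2 * Real.sqrt 2 * M ^ 2 * A := by rw [h2]; ring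
  calc S ^ 3 ≤ Real.sqrt (2 * (A * B)) ^ 3 := key
    _ = 2 * (A * B) * Real.sqrt (2 * (A * B)) := hexp
    _ ≤ 2 * Real.sqrt 2 * M ^ 2 * A := hfinal
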